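/- (Main theorem) Every connected graph that is pseudo-distance-regular around each of its vertices is either distance-regular or distance-biregular. -/

import Mathlib

open Finset

set_option linter.unusedSectionVars false

variable {V : Type*} [Fintype V] [DecidableEq V]

/-- `Γ` is pseudo-distance-regular around `u` (with respect to the Perron weights `α`)
if the weighted numbers `(1/α_w) Σ_{z ∈ Γ(w) ∩ Γ_j(u)} α_z` depend only on
`dist(u,w)` and `j`. -/
def PseudoDistanceRegularAround (G : SimpleGraph V) [DecidableRel G.Adj]
    (α : V → ℝ) (u : V) : Prop :=
  ∀ w z : V, G.dist u w = G.dist u z → ∀ j : ℕ,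
    (1 / α w) * ∑ y ∈ (G.neighborFinset w).filter (fun y => G.dist u y = j), α y =
    (1 / α z) * ∑ y ∈ (G.neighborFinset z).filter (fun y => G.dist u y = j), α y

section Aux

variable (G : SimpleGraph V) [DecidableRel G.Adj] (α : V → ℝ)

noncomputable def betx (u : V) (j i : ℕ) : ℝ :=
  if h : ∃ w, G.dist u w = i then
    (1 / α h.choose) *
      ∑ y ∈ (G.neighborFinset h.choose).filter (fun y => G.dist u y = j), α y
  else 0

noncomputable def sfx (u : V) (ℓ i : ℕ) : ℝ :=
  if h : ∃ w, G.dist u w = i then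
    ((G.adjMatrix ℝ ^ ℓ) u h.choose) / (α u * α h.choose)
  else 0

noncomputable def nbx (u : V) : ℝ := if h : ∃ z, G.Adj u z then α h.choose else 0

noncomputable def valx (u : V) (j : ℕ) : ℝ := if Even j then α u else nbx G α u

end Aux

section Lemmas

variable {G : SimpleGraph V} [DecidableRel G.Adj] {α : V → ℝ} {lam0 : ℝ}

lemma dist_lt_card (hconn : G.Connected) (u v : V) : G.dist u v < Fintype.card V := by
  obtain ⟨p, hp, hl⟩ := hconn.exists_path_of_dist u v
  exact hl ▸ hp.length_lt

lemma adj_dist_le (hconn : G.Connected) {u w y : V} (h : G.Adj w y) :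
    G.dist u y ≤ G.dist u w + 1 ∧ G.dist u w ≤ G.dist u y + 1 := by
  have h1 : G.dist w y = 1 := SimpleGraph.dist_eq_one_iff_adj.mpr h
  have h2 : G.dist y w = 1 := SimpleGraph.dist_eq_one_iff_adj.mpr h.symm
  constructor
  · have := hconn.dist_triangle (u := u) (v := w) (w := y)
    omega
  · have := hconn.dist_triangle (u := u) (v := y) (w := w)
    omega

/-- penultimate vertex on a geodesic -/
lemma exists_penult (hconn : G.Connected) {u x : V} {i : ℕ} (hx : G.dist u x = i + 1) :
    ∃ z, G.Adj x z ∧ G.dist u z = i := by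
  have hne : u ≠ x := by
    intro h; rw [h] at hx; simp [SimpleGraph.dist_self] at hx
  obtain ⟨p, hl⟩ := (hconn u x).exists_walk_length_eq_dist
  obtain ⟨z, h, q, heq⟩ := SimpleGraph.Walk.exists_eq_cons_of_ne hne.symm p.reverse
  have hq : q.length = i := by
    have h2 : p.reverse.length = i + 1 := by rw [SimpleGraph.Walk.length_reverse, hl, hx]
    rw [heq] at h2
    simpa using h2
  have hle : G.dist u z ≤ i := by
    have := SimpleGraph.dist_le q.reverse
    simpa [hq] using this
  have hge : i ≤ G.dist u z := by
    have h3 := (adj_dist_le hconn (u := u) h.symm).1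
    omega
  exact ⟨z, h, le_antisymm hle hge⟩

lemma ne_down (hconn : G.Connected) {u : V} {i : ℕ} (h : ∃ w, G.dist u w = i + 1) :
    ∃ w, G.dist u w = i := by
  obtain ⟨x, hx⟩ := h
  obtain ⟨z, _, hz⟩ := exists_penult hconn hx
  exact ⟨z, hz⟩

lemma exists_nbr [Nontrivial V] (hconn : G.Connected) (u : V) : ∃ z, G.Adj u z := by
  obtain ⟨v, hv⟩ := exists_ne u
  have hd : G.dist u v ≠ 0 := by
    rw [ne_eq, hconn.dist_eq_zero_iff]; exact fun h => hv h.symm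
  obtain ⟨p, hl⟩ := (hconn u v).exists_walk_length_eq_dist
  obtain ⟨z, h, q, rfl⟩ := SimpleGraph.Walk.exists_eq_cons_of_ne (fun h => hv h.symm) p
  exact ⟨z, h⟩

lemma nbx_pos [Nontrivial V] (hconn : G.Connected) (hpos : ∀ v, 0 < α v) (u : V) :
    0 < nbx G α u := by
  rw [nbx, dif_pos (exists_nbr hconn u)]
  exact hpos _

lemma valx_pos [Nontrivial V] (hconn : G.Connected) (hpos : ∀ v, 0 < α v) (u : V) (j : ℕ) :
    0 < valx G α u j := by
  rw [valx]; split
  · exact hpos _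
  · exact nbx_pos hconn hpos u

end Lemmas

section Lemmas2

variable {G : SimpleGraph V} [DecidableRel G.Adj] {α : V → ℝ} {lam0 : ℝ}

lemma betspec (hpdr : ∀ u : V, PseudoDistanceRegularAround G α u) (u w : V) (j : ℕ) :
    betx G α u j (G.dist u w) =
      (1 / α w) * ∑ y ∈ (G.neighborFinset w).filter (fun y => G.dist u y = j), α y := by
  have h : ∃ z, G.dist u z = G.dist u w := ⟨w, rfl⟩
  rw [betx, dif_pos h]
  exact hpdr u h.choose w h.choose_spec j

lemma betx_of_not (u : V) {i : ℕ} (h : ¬ ∃ w, G.dist u w = i) (j : ℕ) :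
    betx G α u j i = 0 := by rw [betx, dif_neg h]

lemma betx_nonneg (hpos : ∀ v, 0 < α v) (u : V) (j i : ℕ) : 0 ≤ betx G α u j i := by
  rw [betx]
  split
  · exact mul_nonneg (one_div_nonneg.mpr (hpos _).le) (Finset.sum_nonneg fun y _ => (hpos y).le)
  · exact le_refl 0

lemma betx_far (hconn : G.Connected) (hpdr : ∀ u : V, PseudoDistanceRegularAround G α u)
    (u : V) {j i : ℕ} (hji : j + 2 ≤ i ∨ i + 2 ≤ j) : betx G α u j i = 0 := by
  by_cases h : ∃ w, G.dist u w = i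
  · obtain ⟨w, hw⟩ := h
    rw [← hw, betspec hpdr]
    have : (G.neighborFinset w).filter (fun y => G.dist u y = j) = ∅ := by
      rw [Finset.filter_eq_empty_iff]
      intro y hy
      rw [SimpleGraph.mem_neighborFinset] at hy
      have := adj_dist_le hconn (u := u) hy
      omega
    rw [this]
    simp
  · exact betx_of_not u h j

lemma betx_big (hconn : G.Connected) (hpdr : ∀ u : V, PseudoDistanceRegularAround G α u)
    (u : V) {j : ℕ} (hj : Fintype.card V ≤ j) (i : ℕ) : betx G α u j i = 0 := by
  by_cases h : ∃ w, G.dist u w = i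
  · obtain ⟨w, hw⟩ := h
    rw [← hw, betspec hpdr]
    have : (G.neighborFinset w).filter (fun y => G.dist u y = j) = ∅ := by
      rw [Finset.filter_eq_empty_iff]
      intro y _
      have := dist_lt_card hconn u y
      omega
    rw [this]
    simp
  · exact betx_of_not u h j

lemma betx_nonzero_ne (hpos : ∀ v, 0 < α v) (u : V) {j i : ℕ} (h : betx G α u j i ≠ 0) :
    ∃ y, G.dist u y = j := by
  rw [betx] at h
  by_cases hw : ∃ w, G.dist u w = i
  · rw [dif_pos hw] at h
    have h2 : ∑ y ∈ (G.neighborFinset hw.choose).filter (fun y => G.dist u y = j), α y ≠ 0 := by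
      intro h0; rw [h0, mul_zero] at h; exact h rfl
    obtain ⟨y, hy⟩ := Finset.nonempty_of_sum_ne_zero h2
    rw [Finset.mem_filter] at hy
    exact ⟨y, hy.2⟩
  · rw [dif_neg hw] at h; exact absurd rfl h

/-- neighbours of a common vertex have equal weight -/
lemma ncx (hconn : G.Connected) (hpos : ∀ v, 0 < α v)
    (hpdr : ∀ u : V, PseudoDistanceRegularAround G α u) {u w z : V}
    (hw : G.Adj u w) (hz : G.Adj u z) : α w = α z := by
  have hdw : G.dist u w = 1 := SimpleGraph.dist_eq_one_iff_adj.mpr hw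
  have hdz : G.dist u z = 1 := SimpleGraph.dist_eq_one_iff_adj.mpr hz
  have key := hpdr u w z (by rw [hdw, hdz]) 0
  have hfw : (G.neighborFinset w).filter (fun y => G.dist u y = 0) = {u} := by
    ext y
    simp only [Finset.mem_filter, SimpleGraph.mem_neighborFinset, Finset.mem_singleton]
    constructor
    · rintro ⟨_, hy0⟩
      exact (hconn.dist_eq_zero_iff.mp hy0).symm
    · rintro rfl
      exact ⟨hw.symm, SimpleGraph.dist_self⟩
  have hfz : (G.neighborFinset z).filter (fun y => G.dist u y = 0) = {u} := by
    ext y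
    simp only [Finset.mem_filter, SimpleGraph.mem_neighborFinset, Finset.mem_singleton]
    constructor
    · rintro ⟨_, hy0⟩
      exact (hconn.dist_eq_zero_iff.mp hy0).symm
    · rintro rfl
      exact ⟨hz.symm, SimpleGraph.dist_self⟩
  rw [hfw, hfz, Finset.sum_singleton] at key
  have hau := (hpos u).ne'
  have haw := (hpos w).ne'
  have haz := (hpos z).ne'
  field_simp at key
  linarith [key]

lemma evenwalk (hconn : G.Connected) (hpos : ∀ v, 0 < α v)
    (hpdr : ∀ u : V, PseudoDistanceRegularAround G α u) :
    ∀ (n : ℕ) (x y : V) (p : G.Walk x y), p.length = n →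
      (Even n → α x = α y) ∧ (Odd n → ∀ z, G.Adj x z → α y = α z) := by
  intro n
  induction n with
  | zero =>
    intro x y p hp
    cases p with
    | nil => exact ⟨fun _ => rfl, fun h => by simp at h⟩
    | cons h q => simp at hp
  | succ n ih =>
    intro x y p hp
    cases p with
    | nil => simp at hp
    | @cons _ w _ h q =>
      have hq := ih _ _ q (by simpa using hp)
      constructor
      · intro hev
        have hodd : Odd n := by
          rcases Nat.even_or_odd n with he | ho
          · exact absurd hev (by simp [Nat.even_add_one, he])
          · exact ho
        exact (hq.2 hodd x h.symm).symm
      · intro hodd z hz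
        have hev : Even n := by
          rcases Nat.even_or_odd n with he | ho
          · exact he
          · exact absurd hodd (by simp [Nat.odd_add_one, Nat.not_even_iff_odd.mpr ho])
        have h1 : α w = α y := hq.1 hev
        have h2 : α w = α z := ncx hconn hpos hpdr h hz
        rw [← h1, h2]

/-- value along any walk is determined by parity -/
lemma walkval (hconn : G.Connected) (hpos : ∀ v, 0 < α v)
    (hpdr : ∀ u : V, PseudoDistanceRegularAround G α u) {r y : V} (p : G.Walk r y) :
    α y = valx G α r p.length := by
  rw [valx]
  split
  · next hev => exact ((evenwalk hconn hpos hpdr p.length r y p rfl).1 hev).symm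
  · next hodd =>
    have ho : Odd p.length := Nat.not_even_iff_odd.mp hodd
    have hex : ∃ z, G.Adj r z := by
      cases p with
      | nil => simp at ho
      | cons h q => exact ⟨_, h⟩
    rw [nbx, dif_pos hex]
    exact (evenwalk hconn hpos hpdr p.length r y p rfl).2 ho hex.choose hex.choose_spec

lemma classval (hconn : G.Connected) (hpos : ∀ v, 0 < α v)
    (hpdr : ∀ u : V, PseudoDistanceRegularAround G α u) {r y : V} {j : ℕ}
    (hd : G.dist r y = j) : α y = valx G α r j := by
  obtain ⟨p, hl⟩ := (hconn r y).exists_walk_length_eq_dist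
  rw [← hd, ← hl]
  exact walkval hconn hpos hpdr p

lemma valx_parity (r : V) {j k : ℕ} (h : Even j ↔ Even k) :
    valx G α r j = valx G α r k := by
  rw [valx, valx]
  by_cases hj : Even j
  · rw [if_pos hj, if_pos (h.mp hj)]
  · rw [if_neg hj, if_neg (fun hk => hj (h.mpr hk))]

end Lemmas2

section Lemmas3

variable {G : SimpleGraph V} [DecidableRel G.Adj] {α : V → ℝ} {lam0 : ℝ}

lemma apow_succ_apply (ℓ : ℕ) (u w : V) :
    (G.adjMatrix ℝ ^ (ℓ + 1)) u w = ∑ y ∈ G.neighborFinset w, (G.adjMatrix ℝ ^ ℓ) u y := by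
  rw [pow_succ, SimpleGraph.mul_adjMatrix_apply]

lemma apow_nonneg (ℓ : ℕ) (u w : V) : 0 ≤ (G.adjMatrix ℝ ^ ℓ) u w := by
  induction ℓ generalizing w with
  | zero =>
    rw [pow_zero, Matrix.one_apply]
    split <;> norm_num
  | succ ℓ ih =>
    rw [apow_succ_apply]
    exact Finset.sum_nonneg fun y _ => ih y

lemma apow_vanish (hconn : G.Connected) (ℓ : ℕ) (u w : V) (h : ℓ < G.dist u w) :
    (G.adjMatrix ℝ ^ ℓ) u w = 0 := by
  induction ℓ generalizing w with
  | zero =>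
    rw [pow_zero, Matrix.one_apply_ne]
    intro he; rw [he, SimpleGraph.dist_self] at h; omega
  | succ ℓ ih =>
    rw [apow_succ_apply]
    refine Finset.sum_eq_zero fun y hy => ?_
    rw [SimpleGraph.mem_neighborFinset] at hy
    refine ih y ?_
    have := adj_dist_le hconn (u := u) hy
    omega

lemma apow_pos (hconn : G.Connected) (ℓ : ℕ) (u w : V) (h : G.dist u w = ℓ) :
    0 < (G.adjMatrix ℝ ^ ℓ) u w := by
  induction ℓ generalizing w with
  | zero =>
    have : u = w := hconn.dist_eq_zero_iff.mp h
    rw [pow_zero, this, Matrix.one_apply_eq]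
    norm_num
  | succ ℓ ih =>
    obtain ⟨z, hz, hdz⟩ := exists_penult hconn h
    rw [apow_succ_apply]
    have hmem : z ∈ G.neighborFinset w := by rw [SimpleGraph.mem_neighborFinset]; exact hz
    have hle : (G.adjMatrix ℝ ^ ℓ) u z ≤ ∑ y ∈ G.neighborFinset w, (G.adjMatrix ℝ ^ ℓ) u y :=
      Finset.single_le_sum (fun y _ => apow_nonneg ℓ u y) hmem
    exact lt_of_lt_of_le (ih z hdz) hle

lemma wd_of_p (hpos : ∀ v, 0 < α v) {ℓ : ℕ}
    (hP : ∀ u w w' : V, G.dist u w = G.dist u w' →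
      (G.adjMatrix ℝ ^ ℓ) u w * α w' = (G.adjMatrix ℝ ^ ℓ) u w' * α w) (u w : V) :
    (G.adjMatrix ℝ ^ ℓ) u w = sfx G α u ℓ (G.dist u w) * (α u * α w) := by
  have hex : ∃ z, G.dist u z = G.dist u w := ⟨w, rfl⟩
  rw [sfx, dif_pos hex]
  have h := hP u hex.choose w hex.choose_spec
  have h1 := (hpos u).ne'
  have h2 := (hpos w).ne'
  have h3 := (hpos hex.choose).ne'
  rw [div_mul_eq_mul_div, eq_div_iff (mul_ne_zero h1 h3)]
  linear_combination (-(α u)) * h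

lemma step_lemma (hconn : G.Connected) (hpos : ∀ v, 0 < α v)
    (hpdr : ∀ u : V, PseudoDistanceRegularAround G α u) {ℓ : ℕ}
    (hwd : ∀ u w : V, (G.adjMatrix ℝ ^ ℓ) u w = sfx G α u ℓ (G.dist u w) * (α u * α w))
    (u w : V) :
    (G.adjMatrix ℝ ^ (ℓ + 1)) u w =
      (∑ j ∈ Finset.range (Fintype.card V), betx G α u j (G.dist u w) * sfx G α u ℓ j) *
        (α u * α w) := by
  rw [apow_succ_apply]
  have hmap : ∀ y ∈ G.neighborFinset w, G.dist u y ∈ Finset.range (Fintype.card V) :=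
    fun y _ => Finset.mem_range.mpr (dist_lt_card hconn u y)
  calc ∑ y ∈ G.neighborFinset w, (G.adjMatrix ℝ ^ ℓ) u y
      = ∑ j ∈ Finset.range (Fintype.card V),
          ∑ y ∈ (G.neighborFinset w).filter (fun y => G.dist u y = j),
            (G.adjMatrix ℝ ^ ℓ) u y := (Finset.sum_fiberwise_of_maps_to hmap _).symm
    _ = ∑ j ∈ Finset.range (Fintype.card V),
          sfx G α u ℓ j * α u * (betx G α u j (G.dist u w) * α w) := by
        refine Finset.sum_congr rfl fun j _ => ?_
        have hin : ∀ y ∈ (G.neighborFinset w).filter (fun y => G.dist u y = j),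
            (G.adjMatrix ℝ ^ ℓ) u y = sfx G α u ℓ j * α u * α y := by
          intro y hy
          rw [Finset.mem_filter] at hy
          rw [hwd u y, hy.2]
          ring
        rw [Finset.sum_congr rfl hin, ← Finset.mul_sum]
        have hb := betspec hpdr u w j
        have h2 := (hpos w).ne'
        field_simp at hb
        rw [hb]
    _ = (∑ j ∈ Finset.range (Fintype.card V),
          betx G α u j (G.dist u w) * sfx G α u ℓ j) * (α u * α w) := by
        rw [Finset.sum_mul]
        refine Finset.sum_congr rfl fun j _ => ?_
        ring

lemma pAll (hconn : G.Connected) (hpos : ∀ v, 0 < α v)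
    (hpdr : ∀ u : V, PseudoDistanceRegularAround G α u) :
    ∀ (ℓ : ℕ) (u w w' : V), G.dist u w = G.dist u w' →
      (G.adjMatrix ℝ ^ ℓ) u w * α w' = (G.adjMatrix ℝ ^ ℓ) u w' * α w := by
  intro ℓ
  induction ℓ with
  | zero =>
    intro u w w' hd
    rw [pow_zero]
    by_cases h1 : u = w
    · have h2 : u = w' := by
        rw [← h1, SimpleGraph.dist_self] at hd
        exact hconn.dist_eq_zero_iff.mp hd.symm
      rw [← h1, ← h2]
    · have h2 : u ≠ w' := by
        intro he
        rw [← he, SimpleGraph.dist_self] at hd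
        exact h1 (hconn.dist_eq_zero_iff.mp hd)
      rw [Matrix.one_apply_ne h1, Matrix.one_apply_ne h2]
      ring
  | succ ℓ ih =>
    intro u w w' hd
    have hwd := wd_of_p hpos (fun u w w' hd => ih u w w' hd)
    rw [step_lemma hconn hpos hpdr hwd u w, step_lemma hconn hpos hpdr hwd u w', hd]
    ring

lemma wd (hconn : G.Connected) (hpos : ∀ v, 0 < α v)
    (hpdr : ∀ u : V, PseudoDistanceRegularAround G α u) (ℓ : ℕ) (u w : V) :
    (G.adjMatrix ℝ ^ ℓ) u w = sfx G α u ℓ (G.dist u w) * (α u * α w) :=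
  wd_of_p hpos (pAll hconn hpos hpdr ℓ) u w

lemma sfx_of_not (u : V) {i : ℕ} (h : ¬ ∃ w, G.dist u w = i) (ℓ : ℕ) :
    sfx G α u ℓ i = 0 := by rw [sfx, dif_neg h]

lemma sfx_recursion (hconn : G.Connected) (hpos : ∀ v, 0 < α v)
    (hpdr : ∀ u : V, PseudoDistanceRegularAround G α u) (ℓ : ℕ) (u : V) (i : ℕ) :
    sfx G α u (ℓ + 1) i =
      ∑ j ∈ Finset.range (Fintype.card V), betx G α u j i * sfx G α u ℓ j := by
  by_cases hex : ∃ w, G.dist u w = i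
  · have hstep := step_lemma hconn hpos hpdr (wd hconn hpos hpdr ℓ) u hex.choose
    rw [hex.choose_spec] at hstep
    rw [sfx, dif_pos hex, hstep]
    have h1 := (hpos u).ne'
    have h3 := (hpos hex.choose).ne'
    field_simp
  · rw [sfx_of_not u hex]
    refine (Finset.sum_eq_zero fun j _ => ?_).symm
    rw [betx_of_not u hex j, zero_mul]

lemma sfx_vanish (hconn : G.Connected) (u : V) {ℓ i : ℕ} (h : ℓ < i) :
    sfx G α u ℓ i = 0 := by
  by_cases hex : ∃ w, G.dist u w = i
  · rw [sfx, dif_pos hex, apow_vanish hconn ℓ u hex.choose (by rw [hex.choose_spec]; omega)]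
    simp
  · exact sfx_of_not u hex ℓ

lemma sfx_pos (hconn : G.Connected) (hpos : ∀ v, 0 < α v) (u : V) {i : ℕ}
    (hex : ∃ w, G.dist u w = i) : 0 < sfx G α u i i := by
  rw [sfx, dif_pos hex]
  exact div_pos (apow_pos hconn i u hex.choose hex.choose_spec)
    (mul_pos (hpos u) (hpos hex.choose))

lemma sfx00 (hconn : G.Connected) (u : V) : sfx G α u 0 0 = 1 / (α u * α u) := by
  have hex : ∃ w, G.dist u w = (0 : ℕ) := ⟨u, SimpleGraph.dist_self⟩
  rw [sfx, dif_pos hex]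
  have hce : u = hex.choose := hconn.dist_eq_zero_iff.mp hex.choose_spec
  rw [← hce, pow_zero, Matrix.one_apply_eq, one_div]

lemma sym_sfx (hconn : G.Connected) (hpos : ∀ v, 0 < α v)
    (hpdr : ∀ u : V, PseudoDistanceRegularAround G α u) (ℓ : ℕ) (u v : V) :
    sfx G α u ℓ (G.dist u v) = sfx G α v ℓ (G.dist u v) := by
  have h1 := wd hconn hpos hpdr ℓ u v
  have h2 := wd hconn hpos hpdr ℓ v u
  have ht : (G.adjMatrix ℝ ^ ℓ) v u = (G.adjMatrix ℝ ^ ℓ) u v :=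
    ((SimpleGraph.isSymm_adjMatrix G).pow ℓ).apply u v
  rw [ht, SimpleGraph.dist_comm (u := v) (v := u)] at h2
  have h3 := h1.symm.trans h2
  have hmul : α u * α v ≠ 0 := mul_ne_zero (hpos u).ne' (hpos v).ne'
  have h4 : sfx G α u ℓ (G.dist u v) * (α u * α v) = sfx G α v ℓ (G.dist u v) * (α u * α v) := by
    rw [h3]; ring
  exact mul_right_cancel₀ hmul h4

end Lemmas3

section Lemmas4

variable {G : SimpleGraph V} [DecidableRel G.Adj] {α : V → ℝ} {lam0 : ℝ}

lemma heig_apply (heig : (G.adjMatrix ℝ).mulVec α = lam0 • α) (w : V) :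
    ∑ y ∈ G.neighborFinset w, α y = lam0 * α w := by
  have := congrFun heig w
  rwa [SimpleGraph.adjMatrix_mulVec_apply, Pi.smul_apply, smul_eq_mul] at this

lemma bet00 (hconn : G.Connected) (hpdr : ∀ u : V, PseudoDistanceRegularAround G α u)
    (u : V) : betx G α u 0 0 = 0 := by
  have h0 : G.dist u u = 0 := SimpleGraph.dist_self
  rw [← h0, betspec hpdr]
  have : (G.neighborFinset u).filter (fun y => G.dist u y = 0) = ∅ := by
    rw [Finset.filter_eq_empty_iff]
    intro y hy
    rw [SimpleGraph.mem_neighborFinset] at hy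
    intro hd
    exact hy.ne' (hconn.dist_eq_zero_iff.mp hd).symm
  rw [h0, this]
  simp

lemma bet10 (hconn : G.Connected) (hpos : ∀ v, 0 < α v)
    (hpdr : ∀ u : V, PseudoDistanceRegularAround G α u)
    (heig : (G.adjMatrix ℝ).mulVec α = lam0 • α) (u : V) : betx G α u 1 0 = lam0 := by
  have h0 : G.dist u u = 0 := SimpleGraph.dist_self
  rw [← h0, betspec hpdr]
  have hf : (G.neighborFinset u).filter (fun y => G.dist u y = 1) = G.neighborFinset u := by
    rw [Finset.filter_eq_self]
    intro y hy
    rw [SimpleGraph.mem_neighborFinset] at hy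
    exact SimpleGraph.dist_eq_one_iff_adj.mpr hy
  rw [hf, heig_apply heig]
  have := (hpos u).ne'
  field_simp

lemma rowsum (hconn : G.Connected) (hpos : ∀ v, 0 < α v)
    (hpdr : ∀ u : V, PseudoDistanceRegularAround G α u)
    (heig : (G.adjMatrix ℝ).mulVec α = lam0 • α) (u : V) {i : ℕ}
    (hex : ∃ w, G.dist u w = i) :
    ∑ j ∈ Finset.range (Fintype.card V), betx G α u j i = lam0 := by
  obtain ⟨w, hw⟩ := hex
  have hb : ∀ j, betx G α u j i =
      (1 / α w) * ∑ y ∈ (G.neighborFinset w).filter (fun y => G.dist u y = j), α y := by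
    intro j; rw [← hw, betspec hpdr]
  have hmap : ∀ y ∈ G.neighborFinset w, G.dist u y ∈ Finset.range (Fintype.card V) :=
    fun y _ => Finset.mem_range.mpr (dist_lt_card hconn u y)
  calc ∑ j ∈ Finset.range (Fintype.card V), betx G α u j i
      = (1 / α w) * ∑ j ∈ Finset.range (Fintype.card V),
          ∑ y ∈ (G.neighborFinset w).filter (fun y => G.dist u y = j), α y := by
        rw [Finset.mul_sum]
        exact Finset.sum_congr rfl fun j _ => hb j
    _ = (1 / α w) * ∑ y ∈ G.neighborFinset w, α y := by
        rw [Finset.sum_fiberwise_of_maps_to hmap]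
    _ = lam0 := by
        rw [heig_apply heig]
        have := (hpos w).ne'
        field_simp

lemma moment [Nontrivial V] (hconn : G.Connected) (hpos : ∀ v, 0 < α v)
    (hpdr : ∀ u : V, PseudoDistanceRegularAround G α u)
    (heig : (G.adjMatrix ℝ).mulVec α = lam0 • α) (ℓ : ℕ) (u : V) :
    sfx G α u (ℓ + 1) 0 = lam0 * sfx G α u ℓ 1 := by
  rw [sfx_recursion hconn hpos hpdr]
  rw [Finset.sum_eq_single 1]
  · rw [bet10 hconn hpos hpdr heig]
  · intro j _ hj1
    rcases Nat.eq_zero_or_pos j with rfl | hj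
    · rw [bet00 hconn hpdr, zero_mul]
    · have : (0:ℕ) + 2 ≤ j := by omega
      rw [betx_far hconn hpdr u (Or.inr this), zero_mul]
  · intro h1
    exfalso
    exact h1 (Finset.mem_range.mpr Fintype.one_lt_card)

lemma global_moment [Nontrivial V] (hconn : G.Connected) (hpos : ∀ v, 0 < α v)
    (hpdr : ∀ u : V, PseudoDistanceRegularAround G α u)
    (heig : (G.adjMatrix ℝ).mulVec α = lam0 • α) (ℓ : ℕ) (u v : V) :
    sfx G α u (ℓ + 1) 0 = sfx G α v (ℓ + 1) 0 := by
  have hedge : ∀ x y : V, G.Adj x y → sfx G α x (ℓ + 1) 0 = sfx G α y (ℓ + 1) 0 := by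
    intro x y hxy
    rw [moment hconn hpos hpdr heig, moment hconn hpos hpdr heig]
    have hd : G.dist x y = 1 := SimpleGraph.dist_eq_one_iff_adj.mpr hxy
    have := sym_sfx hconn hpos hpdr ℓ x y
    rw [hd] at this
    rw [this]
  obtain ⟨p⟩ := hconn u v
  induction p with
  | nil => rfl
  | cons h q ih => exact (hedge _ _ h).trans ih

end Lemmas4

section Lemmas5

variable {G : SimpleGraph V} [DecidableRel G.Adj] {α : V → ℝ} {lam0 : ℝ}

lemma betx_bpos (hconn : G.Connected) (hpos : ∀ v, 0 < α v)
    (hpdr : ∀ u : V, PseudoDistanceRegularAround G α u) (u : V) {i : ℕ}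
    (hx : ∃ x, G.dist u x = i + 1) : 0 < betx G α u (i + 1) i := by
  obtain ⟨x, hx⟩ := hx
  obtain ⟨z, hadj, hz⟩ := exists_penult hconn hx
  rw [← hz, betspec hpdr]
  refine mul_pos (one_div_pos.mpr (hpos z)) (Finset.sum_pos (fun y _ => hpos y) ?_)
  refine ⟨x, ?_⟩
  rw [Finset.mem_filter, SimpleGraph.mem_neighborFinset]
  exact ⟨hadj.symm, by rw [hz]; exact hx⟩

lemma master [Nontrivial V] (hconn : G.Connected) (hpos : ∀ v, 0 < α v)
    (hpdr : ∀ u : V, PseudoDistanceRegularAround G α u)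
    (heig : (G.adjMatrix ℝ).mulVec α = lam0 • α) (u u' : V) (hα : α u = α u') :
    ∀ i : ℕ, ((∃ w, G.dist u w = i) ↔ (∃ w, G.dist u' w = i)) ∧
      (∀ j, j ≤ i → ∀ ℓ, sfx G α u ℓ j = sfx G α u' ℓ j) ∧
      (∀ j, j ≤ i → ∀ k, betx G α u k j = betx G α u' k j) := by
  have hS : ∀ ℓ, sfx G α u ℓ 0 = sfx G α u' ℓ 0 := by
    intro ℓ
    cases ℓ with
    | zero => rw [sfx00 hconn, sfx00 hconn, hα]
    | succ ℓ => exact global_moment hconn hpos hpdr heig ℓ u u'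
  intro i
  induction i with
  | zero =>
    refine ⟨iff_of_true ⟨u, SimpleGraph.dist_self⟩ ⟨u', SimpleGraph.dist_self⟩, ?_, ?_⟩
    · intro j hj ℓ
      obtain rfl := Nat.le_zero.mp hj
      exact hS ℓ
    · intro j hj k
      obtain rfl := Nat.le_zero.mp hj
      rcases Nat.lt_or_ge k 2 with hk | hk
      · interval_cases k
        · rw [bet00 hconn hpdr, bet00 hconn hpdr]
        · rw [bet10 hconn hpos hpdr heig, bet10 hconn hpos hpdr heig]
      · rw [betx_far hconn hpdr u (Or.inr hk), betx_far hconn hpdr u' (Or.inr hk)]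
  | succ i ih =>
    obtain ⟨hNE, hs, hb⟩ := ih
    have hNE1 : (∃ w, G.dist u w = i + 1) ↔ (∃ w, G.dist u' w = i + 1) := by
      constructor
      · intro hx
        have hp := betx_bpos hconn hpos hpdr u hx
        rw [hb i le_rfl (i + 1)] at hp
        exact betx_nonzero_ne hpos u' hp.ne'
      · intro hx
        have hp := betx_bpos hconn hpos hpdr u' hx
        rw [← hb i le_rfl (i + 1)] at hp
        exact betx_nonzero_ne hpos u hp.ne'
    by_cases hex1 : ∃ w, G.dist u w = i + 1
    · have hex1' : ∃ w, G.dist u' w = i + 1 := hNE1.mp hex1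
      have hexi : ∃ w, G.dist u w = i := ne_down hconn hex1
      have hexi' : ∃ w, G.dist u' w = i := hNE.mp hexi
      have hn1 : i + 1 < Fintype.card V := by
        obtain ⟨w, hw⟩ := hex1
        have := dist_lt_card hconn u w
        omega
      have hbeq : betx G α u (i + 1) i = betx G α u' (i + 1) i := hb i le_rfl (i + 1)
      have hbpos : 0 < betx G α u (i + 1) i := betx_bpos hconn hpos hpdr u hex1
      have hsnew : ∀ ℓ, sfx G α u ℓ (i + 1) = sfx G α u' ℓ (i + 1) := by
        intro ℓ
        have hrec := sfx_recursion hconn hpos hpdr ℓ u i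
        have hrec' := sfx_recursion hconn hpos hpdr ℓ u' i
        have hmem : i + 1 ∈ Finset.range (Fintype.card V) := Finset.mem_range.mpr hn1
        rw [← Finset.sum_erase_add _ _ hmem] at hrec hrec'
        have hrest : ∑ j ∈ (Finset.range (Fintype.card V)).erase (i + 1),
              betx G α u j i * sfx G α u ℓ j =
            ∑ j ∈ (Finset.range (Fintype.card V)).erase (i + 1),
              betx G α u' j i * sfx G α u' ℓ j := by
          refine Finset.sum_congr rfl fun j hj => ?_
          rw [Finset.mem_erase] at hj
          rcases Nat.lt_or_ge j (i + 1) with hji | hji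
          · rw [hb i le_rfl j, hs j (by omega) ℓ]
          · have h2 : i + 2 ≤ j := by omega
            rw [betx_far hconn hpdr u (Or.inr h2), betx_far hconn hpdr u' (Or.inr h2),
              zero_mul, zero_mul]
        have hleft : sfx G α u (ℓ + 1) i = sfx G α u' (ℓ + 1) i := hs i le_rfl (ℓ + 1)
        rw [hbeq] at hrec
        have hkey : betx G α u' (i + 1) i * sfx G α u ℓ (i + 1) =
            betx G α u' (i + 1) i * sfx G α u' ℓ (i + 1) := by
          linarith [hrec, hrec', hrest, hleft]
        have hbpos' : 0 < betx G α u' (i + 1) i := hbeq ▸ hbpos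
        exact mul_left_cancel₀ hbpos'.ne' hkey
      have hbnew : ∀ k, betx G α u k (i + 1) = betx G α u' k (i + 1) := by
        intro k
        by_cases hk1 : k + 2 ≤ i + 1
        · rw [betx_far hconn hpdr u (Or.inl hk1), betx_far hconn hpdr u' (Or.inl hk1)]
        by_cases hk2 : i + 3 ≤ k
        · rw [betx_far hconn hpdr u (Or.inr hk2), betx_far hconn hpdr u' (Or.inr hk2)]
        have hcase : k = i ∨ k = i + 1 ∨ k = i + 2 := by omega
        have hspos : 0 < sfx G α u' i i := sfx_pos hconn hpos u' hexi'
        have hspos1 : 0 < sfx G α u' (i + 1) (i + 1) := sfx_pos hconn hpos u' hex1'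
        have collapse_c : ∀ (x : V), (∃ w, G.dist x w = i) → (∃ w, G.dist x w = i + 1) →
            sfx G α x (i + 1) (i + 1) = betx G α x i (i + 1) * sfx G α x i i := by
          intro x hxi hxi1
          have hrec := sfx_recursion hconn hpos hpdr i x (i + 1)
          rw [Finset.sum_eq_single i] at hrec
          · exact hrec
          · intro j hjr hji
            rcases Nat.lt_or_ge j i with hj | hj
            · rw [betx_far hconn hpdr x (Or.inl (by omega)), zero_mul]
            · rw [sfx_vanish hconn x (by omega), mul_zero]
          · intro habs
            exact absurd (Finset.mem_range.mpr (by omega)) habs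
        have collapse_a : ∀ (x : V), (∃ w, G.dist x w = i) → (∃ w, G.dist x w = i + 1) →
            sfx G α x (i + 2) (i + 1) = betx G α x i (i + 1) * sfx G α x (i + 1) i +
              betx G α x (i + 1) (i + 1) * sfx G α x (i + 1) (i + 1) := by
          intro x hxi hxi1
          have hrec := sfx_recursion hconn hpos hpdr (i + 1) x (i + 1)
          have hsub : ({i, i + 1} : Finset ℕ) ⊆ Finset.range (Fintype.card V) := by
            intro j hj
            rw [Finset.mem_insert, Finset.mem_singleton] at hj
            rcases hj with rfl | rfl <;> exact Finset.mem_range.mpr (by omega)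
          rw [← Finset.sum_subset hsub] at hrec
          · rw [hrec, Finset.sum_insert (by simp), Finset.sum_singleton]
          · intro j hjr hjn
            rw [Finset.mem_insert, Finset.mem_singleton] at hjn
            push_neg at hjn
            rcases Nat.lt_or_ge j i with hj | hj
            · rw [betx_far hconn hpdr x (Or.inl (by omega)), zero_mul]
            · rw [sfx_vanish hconn x (by omega), mul_zero]
        have hceq : betx G α u i (i + 1) = betx G α u' i (i + 1) := by
          have h1 := collapse_c u hexi hex1
          have h2 := collapse_c u' hexi' hex1'
          have h3 : betx G α u i (i + 1) * sfx G α u' i i =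
              betx G α u' i (i + 1) * sfx G α u' i i := by
            rw [← hs i le_rfl i, ← h1, hsnew (i + 1), hs i le_rfl i]
            exact h2
          exact mul_right_cancel₀ hspos.ne' h3
        have haeq : betx G α u (i + 1) (i + 1) = betx G α u' (i + 1) (i + 1) := by
          have h1 := collapse_a u hexi hex1
          have h2 := collapse_a u' hexi' hex1'
          have e1 : sfx G α u (i + 2) (i + 1) = sfx G α u' (i + 2) (i + 1) := hsnew (i + 2)
          have e2 : sfx G α u (i + 1) i = sfx G α u' (i + 1) i := hs i le_rfl (i + 1)
          have e3 : sfx G α u (i + 1) (i + 1) = sfx G α u' (i + 1) (i + 1) := hsnew (i + 1)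
          rw [hceq, e2, e3, e1] at h1
          have h3 : betx G α u (i + 1) (i + 1) * sfx G α u' (i + 1) (i + 1) =
              betx G α u' (i + 1) (i + 1) * sfx G α u' (i + 1) (i + 1) := by
            linarith [h1, h2]
          exact mul_right_cancel₀ hspos1.ne' h3
        rcases hcase with rfl | rfl | rfl
        · exact hceq
        · exact haeq
        · by_cases hbig : Fintype.card V ≤ i + 2
          · rw [betx_big hconn hpdr u hbig, betx_big hconn hpdr u' hbig]
          push_neg at hbig
          have hrs := rowsum hconn hpos hpdr heig u hex1
          have hrs' := rowsum hconn hpos hpdr heig u' hex1'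
          have hsub : ({i, i + 1, i + 2} : Finset ℕ) ⊆ Finset.range (Fintype.card V) := by
            intro j hj
            simp only [Finset.mem_insert, Finset.mem_singleton] at hj
            rcases hj with rfl | rfl | rfl <;> exact Finset.mem_range.mpr (by omega)
          have hzero : ∀ (x : V), ∀ j ∈ Finset.range (Fintype.card V),
              j ∉ ({i, i + 1, i + 2} : Finset ℕ) → betx G α x j (i + 1) = 0 := by
            intro x j hjr hjn
            simp only [Finset.mem_insert, Finset.mem_singleton] at hjn
            push_neg at hjn
            rcases Nat.lt_or_ge j i with hj | hj
            · exact betx_far hconn hpdr x (Or.inl (by omega))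
            · exact betx_far hconn hpdr x (Or.inr (by omega))
          rw [← Finset.sum_subset hsub (fun j h1 h2 => hzero u j h1 h2)] at hrs
          rw [← Finset.sum_subset hsub (fun j h1 h2 => hzero u' j h1 h2)] at hrs'
          rw [Finset.sum_insert (by simp), Finset.sum_insert (by simp),
            Finset.sum_singleton] at hrs hrs'
          linarith [hrs, hrs', hceq, haeq]
      refine ⟨hNE1, ?_, ?_⟩
      · intro j hj ℓ
        rcases Nat.lt_or_ge j (i + 1) with h | h
        · exact hs j (by omega) ℓ
        · have : j = i + 1 := by omega
          rw [this]; exact hsnew ℓ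
      · intro j hj k
        rcases Nat.lt_or_ge j (i + 1) with h | h
        · exact hb j (by omega) k
        · have : j = i + 1 := by omega
          rw [this]; exact hbnew k
    · have hex1' : ¬ ∃ w, G.dist u' w = i + 1 := fun h => hex1 (hNE1.mpr h)
      refine ⟨hNE1, ?_, ?_⟩
      · intro j hj ℓ
        rcases Nat.lt_or_ge j (i + 1) with h | h
        · exact hs j (by omega) ℓ
        · have hji : j = i + 1 := by omega
          subst hji
          rw [sfx_of_not u hex1, sfx_of_not u' hex1']
      · intro j hj k
        rcases Nat.lt_or_ge j (i + 1) with h | h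
        · exact hb j (by omega) k
        · have hji : j = i + 1 := by omega
          subst hji
          rw [betx_of_not u hex1, betx_of_not u' hex1']

end Lemmas5

section Lemmas6

variable {G : SimpleGraph V} [DecidableRel G.Adj] {α : V → ℝ} {lam0 : ℝ}

lemma cards_eq [Nontrivial V] (hconn : G.Connected) (hpos : ∀ v, 0 < α v)
    (hpdr : ∀ u : V, PseudoDistanceRegularAround G α u)
    (heig : (G.adjMatrix ℝ).mulVec α = lam0 • α)
    (u u' v v' : V) (hα : α u = α u') (hν : nbx G α u = nbx G α u')
    (hd : G.dist u v = G.dist u' v') (j : ℕ) :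
    ((G.neighborFinset v).filter (fun y => G.dist u y = j)).card =
      ((G.neighborFinset v').filter (fun y => G.dist u' y = j)).card := by
  have hval : ∀ k, valx G α u k = valx G α u' k := by
    intro k; rw [valx, valx, hα, hν]
  have hform : ∀ (x z : V) (k : ℕ),
      (((G.neighborFinset z).filter (fun y => G.dist x y = k)).card : ℝ) * valx G α x k =
        betx G α x k (G.dist x z) * α z := by
    intro x z k
    have hb := betspec hpdr x z k
    have hz := (hpos z).ne'
    have hsum : ∑ y ∈ (G.neighborFinset z).filter (fun y => G.dist x y = k), α y =
        (((G.neighborFinset z).filter (fun y => G.dist x y = k)).card : ℝ) *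
          valx G α x k := by
      rw [Finset.sum_congr rfl
        (fun y hy => classval hconn hpos hpdr (Finset.mem_filter.mp hy).2)]
      rw [Finset.sum_const, nsmul_eq_mul]
    rw [← hsum, hb]
    field_simp
  have hbeteq : betx G α u j (G.dist u v) = betx G α u' j (G.dist u v) :=
    (master hconn hpos hpdr heig u u' hα (G.dist u v)).2.2 (G.dist u v) le_rfl j
  have hαvv : α v = α v' := by
    have hv : α v = valx G α u (G.dist u v) := classval hconn hpos hpdr rfl
    have hv' : α v' = valx G α u' (G.dist u' v') := classval hconn hpos hpdr rfl
    rw [hv, hv', ← hd, hval]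
  have h1 := hform u v j
  have h2 := hform u' v' j
  rw [← hd, ← hval j, ← hbeteq, ← hαvv] at h2
  have hvne := (valx_pos hconn hpos u j).ne'
  have := h1.trans h2.symm
  exact_mod_cast mul_right_cancel₀ hvne this

end Lemmas6

/-- `Γ` is distance-regular if the intersection numbers `a_i`, `b_i`, `c_i` of the
distance partition around any vertex are independent of the base vertex. -/
def IsDistanceRegular (G : SimpleGraph V) [DecidableRel G.Adj] : Prop :=
  ∃ a b c : ℕ → ℕ, ∀ u v : V,
    ((G.neighborFinset v).filter (fun y => G.dist u y = G.dist u v)).card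
        = a (G.dist u v) ∧
    ((G.neighborFinset v).filter (fun y => G.dist u y = G.dist u v + 1)).card
        = b (G.dist u v) ∧
    ((G.neighborFinset v).filter (fun y => G.dist u y + 1 = G.dist u v)).card
        = c (G.dist u v)

/-- `Γ` is distance-biregular if it is bipartite and the intersection numbers of the
distance partition around a base vertex depend only on the partite set of that vertex. -/
def IsDistanceBiregular (G : SimpleGraph V) [DecidableRel G.Adj] : Prop :=
  ∃ V₁ V₂ : Set V,
    (∀ v : V, v ∈ V₁ ∨ v ∈ V₂) ∧ Disjoint V₁ V₂ ∧
    (∀ u v : V, G.Adj u v → (u ∈ V₁ ∧ v ∈ V₂) ∨ (u ∈ V₂ ∧ v ∈ V₁)) ∧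
    ∃ b₁ c₁ b₂ c₂ : ℕ → ℕ,
      (∀ u ∈ V₁, ∀ v : V,
        ((G.neighborFinset v).filter (fun y => G.dist u y = G.dist u v + 1)).card
            = b₁ (G.dist u v) ∧
        ((G.neighborFinset v).filter (fun y => G.dist u y + 1 = G.dist u v)).card
            = c₁ (G.dist u v)) ∧
      (∀ u ∈ V₂, ∀ v : V,
        ((G.neighborFinset v).filter (fun y => G.dist u y = G.dist u v + 1)).card
            = b₂ (G.dist u v) ∧
        ((G.neighborFinset v).filter (fun y => G.dist u y + 1 = G.dist u v)).card
            = c₂ (G.dist u v))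

/-- **Main theorem.** Every connected graph that is pseudo-distance-regular around
each of its vertices is either distance-regular or distance-biregular. -/
theorem pseudo_distance_regularised_is_dr_or_dbr
    (G : SimpleGraph V) [DecidableRel G.Adj] (hconn : G.Connected)
    (lam0 : ℝ) (α : V → ℝ) (hpos : ∀ v, 0 < α v)
    (heig : (G.adjMatrix ℝ).mulVec α = lam0 • α)
    (hnorm : ∑ v : V, α v ^ 2 = (Fintype.card V : ℝ))
    (hpdr : ∀ u : V, PseudoDistanceRegularAround G α u) :
    IsDistanceRegular G ∨ IsDistanceBiregular G := by
  classical
  rcases subsingleton_or_nontrivial V with hsub | hnt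
  · left
    refine ⟨fun _ => 0, fun _ => 0, fun _ => 0, fun u v => ?_⟩
    have hne : G.neighborFinset v = ∅ := by
      ext y
      simp only [SimpleGraph.mem_neighborFinset, Finset.notMem_empty, iff_false]
      intro h
      exact h.ne (Subsingleton.elim v y)
    simp [hne]
  · have hr : ∀ (u u' v v' : V), α u = α u' → nbx G α u = nbx G α u' →
        G.dist u v = G.dist u' v' → ∀ j,
        ((G.neighborFinset v).filter (fun y => G.dist u y = j)).card =
        ((G.neighborFinset v').filter (fun y => G.dist u' y = j)).card :=
      fun u u' v v' h1 h2 h3 j => cards_eq hconn hpos hpdr heig u u' v v' h1 h2 h3 j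
    set r := Classical.arbitrary V with hrdef
    by_cases hpq : α r = nbx G α r
    · left
      have hconst : ∀ w, α w = α r := by
        intro w
        rw [classval hconn hpos hpdr (rfl : G.dist r w = G.dist r w), valx]
        split
        · rfl
        · exact hpq.symm
      have hνconst : ∀ w, nbx G α w = α r := by
        intro w
        rw [nbx, dif_pos (exists_nbr hconn w)]
        exact hconst _
      refine ⟨fun i => if h : ∃ p : V × V, G.dist p.1 p.2 = i then
          ((G.neighborFinset h.choose.2).filter
            (fun y => G.dist h.choose.1 y = i)).card else 0,
        fun i => if h : ∃ p : V × V, G.dist p.1 p.2 = i then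
          ((G.neighborFinset h.choose.2).filter
            (fun y => G.dist h.choose.1 y = i + 1)).card else 0,
        fun i => if h : ∃ p : V × V, G.dist p.1 p.2 = i then
          (if i = 0 then 0 else ((G.neighborFinset h.choose.2).filter
            (fun y => G.dist h.choose.1 y = i - 1)).card) else 0,
        fun u v => ?_⟩
      have hex : ∃ p : V × V, G.dist p.1 p.2 = G.dist u v := ⟨(u, v), rfl⟩
      have hα1 : α u = α hex.choose.1 := (hconst u).trans (hconst _).symm
      have hν1 : nbx G α u = nbx G α hex.choose.1 := (hνconst u).trans (hνconst _).symm
      have hd1 : G.dist u v = G.dist hex.choose.1 hex.choose.2 := hex.choose_spec.symm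
      refine ⟨?_, ?_, ?_⟩
      · beta_reduce
        rw [dif_pos hex]
        have := hr u hex.choose.1 v hex.choose.2 hα1 hν1 hd1 (G.dist u v)
        rw [this]
      · beta_reduce
        rw [dif_pos hex]
        have := hr u hex.choose.1 v hex.choose.2 hα1 hν1 hd1 (G.dist u v + 1)
        rw [this]
      · beta_reduce
        rw [dif_pos hex]
        by_cases h0 : G.dist u v = 0
        · rw [if_pos h0, Finset.card_eq_zero, Finset.filter_eq_empty_iff]
          intro y _
          omega
        · rw [if_neg h0]
          have hfc : (G.neighborFinset v).filter (fun y => G.dist u y + 1 = G.dist u v) =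
              (G.neighborFinset v).filter (fun y => G.dist u y = G.dist u v - 1) := by
            apply Finset.filter_congr
            intro y _
            constructor <;> (intro h; omega)
          rw [hfc]
          have := hr u hex.choose.1 v hex.choose.2 hα1 hν1 hd1 (G.dist u v - 1)
          rw [this]
    · right
      have hcross : ∀ u v : V, G.Adj u v → ¬ (Even (G.dist r u) ↔ Even (G.dist r v)) := by
        intro u v huv hpar
        obtain ⟨p, hp⟩ := (hconn r u).exists_walk_length_eq_dist
        have h1 : α v = valx G α r (G.dist r u + 1) := by
          have := walkval hconn hpos hpdr (p.concat huv)
          rwa [SimpleGraph.Walk.length_concat, hp] at this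
        have h2 : α v = valx G α r (G.dist r u) :=
          (classval hconn hpos hpdr (rfl : G.dist r v = G.dist r v)).trans
            (valx_parity r hpar.symm)
        have h3 : valx G α r (G.dist r u) = valx G α r (G.dist r u + 1) := h2.symm.trans h1
        rw [valx, valx] at h3
        by_cases he : Even (G.dist r u)
        · rw [if_pos he, if_neg (by rw [Nat.even_add_one]; exact not_not_intro he)] at h3
          exact hpq h3
        · rw [if_neg he, if_pos (Nat.even_add_one.mpr he)] at h3
          exact hpq h3.symm
      have hαeven : ∀ u : V, Even (G.dist r u) → α u = α r := by
        intro u hu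
        rw [classval hconn hpos hpdr (rfl : G.dist r u = G.dist r u), valx, if_pos hu]
      have hαodd : ∀ u : V, ¬ Even (G.dist r u) → α u = nbx G α r := by
        intro u hu
        rw [classval hconn hpos hpdr (rfl : G.dist r u = G.dist r u), valx, if_neg hu]
      have hνeven : ∀ u : V, Even (G.dist r u) → nbx G α u = nbx G α r := by
        intro u hu
        have hexz := exists_nbr hconn u
        rw [nbx, dif_pos hexz]
        exact hαodd _ (fun hev => hcross u hexz.choose hexz.choose_spec (iff_of_true hu hev))
      have hνodd : ∀ u : V, ¬ Even (G.dist r u) → nbx G α u = α r := by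
        intro u hu
        have hexz := exists_nbr hconn u
        rw [nbx, dif_pos hexz]
        refine hαeven _ ?_
        by_contra hno
        exact hcross u hexz.choose hexz.choose_spec (iff_of_false hu hno)
      refine ⟨{w | Even (G.dist r w)}, {w | ¬ Even (G.dist r w)}, fun v => ?_, ?_, ?_, ?_⟩
      · simp only [Set.mem_setOf_eq]
        exact em _
      · rw [Set.disjoint_left]
        intro a ha hb
        exact hb ha
      · intro u v huv
        simp only [Set.mem_setOf_eq]
        by_cases hu : Even (G.dist r u)
        · left
          exact ⟨hu, fun hv => hcross u v huv (iff_of_true hu hv)⟩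
        · right
          refine ⟨hu, ?_⟩
          by_contra hv
          exact hcross u v huv (iff_of_false hu hv)
      · refine ⟨fun i => if h : ∃ p : V × V, Even (G.dist r p.1) ∧ G.dist p.1 p.2 = i then
            ((G.neighborFinset h.choose.2).filter
              (fun y => G.dist h.choose.1 y = i + 1)).card else 0,
          fun i => if h : ∃ p : V × V, Even (G.dist r p.1) ∧ G.dist p.1 p.2 = i then
            (if i = 0 then 0 else ((G.neighborFinset h.choose.2).filter
              (fun y => G.dist h.choose.1 y = i - 1)).card) else 0,
          fun i => if h : ∃ p : V × V, ¬ Even (G.dist r p.1) ∧ G.dist p.1 p.2 = i then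
            ((G.neighborFinset h.choose.2).filter
              (fun y => G.dist h.choose.1 y = i + 1)).card else 0,
          fun i => if h : ∃ p : V × V, ¬ Even (G.dist r p.1) ∧ G.dist p.1 p.2 = i then
            (if i = 0 then 0 else ((G.neighborFinset h.choose.2).filter
              (fun y => G.dist h.choose.1 y = i - 1)).card) else 0,
          ?_, ?_⟩
        · -- part goal
          intro u hu v
          have hu' : Even (G.dist r u) := hu
          have hex : ∃ p : V × V, Even (G.dist r p.1) ∧ G.dist p.1 p.2 = G.dist u v :=
            ⟨(u, v), hu', rfl⟩
          have hc1 := hex.choose_spec.1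
          have hα1 : α u = α hex.choose.1 := (hαeven u hu').trans (hαeven _ hc1).symm
          have hν1 : nbx G α u = nbx G α hex.choose.1 := (hνeven u hu').trans (hνeven _ hc1).symm
          have hd1 : G.dist u v = G.dist hex.choose.1 hex.choose.2 := hex.choose_spec.2.symm
          constructor
          · beta_reduce
            rw [dif_pos hex]
            exact hr u hex.choose.1 v hex.choose.2 hα1 hν1 hd1 (G.dist u v + 1)
          · beta_reduce
            rw [dif_pos hex]
            by_cases h0 : G.dist u v = 0
            · rw [if_pos h0, Finset.card_eq_zero, Finset.filter_eq_empty_iff]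
              intro y _
              omega
            · rw [if_neg h0]
              have hfc : (G.neighborFinset v).filter (fun y => G.dist u y + 1 = G.dist u v) =
                  (G.neighborFinset v).filter (fun y => G.dist u y = G.dist u v - 1) := by
                apply Finset.filter_congr
                intro y _
                constructor <;> (intro h; omega)
              rw [hfc]
              exact hr u hex.choose.1 v hex.choose.2 hα1 hν1 hd1 (G.dist u v - 1)
        · -- part goal
          intro u hu v
          have hu' : ¬ Even (G.dist r u) := hu
          have hex : ∃ p : V × V, ¬ Even (G.dist r p.1) ∧ G.dist p.1 p.2 = G.dist u v :=
            ⟨(u, v), hu', rfl⟩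
          have hc1 := hex.choose_spec.1
          have hα1 : α u = α hex.choose.1 := (hαodd u hu').trans (hαodd _ hc1).symm
          have hν1 : nbx G α u = nbx G α hex.choose.1 := (hνodd u hu').trans (hνodd _ hc1).symm
          have hd1 : G.dist u v = G.dist hex.choose.1 hex.choose.2 := hex.choose_spec.2.symm
          constructor
          · beta_reduce
            rw [dif_pos hex]
            exact hr u hex.choose.1 v hex.choose.2 hα1 hν1 hd1 (G.dist u v + 1)
          · beta_reduce
            rw [dif_pos hex]
            by_cases h0 : G.dist u v = 0
            · rw [if_pos h0, Finset.card_eq_zero, Finset.filter_eq_empty_iff]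
              intro y _
              omega
            · rw [if_neg h0]
              have hfc : (G.neighborFinset v).filter (fun y => G.dist u y + 1 = G.dist u v) =
                  (G.neighborFinset v).filter (fun y => G.dist u y = G.dist u v - 1) := by
                apply Finset.filter_congr
                intro y _
                constructor <;> (intro h; omega)
              rw [hfc]
              exact hr u hex.choose.1 v hex.choose.2 hα1 hν1 hd1 (G.dist u v - 1)
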